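/- If θ_C < θ_F and the effective-threshold map B ↦ θ^(B) preserves order (θ_C^(B) ≤ θ_F^(B) for all B ≥ 0), and the unfairness function U : [0,1] → ℝ is increasing on [0,θ_U] and decreasing on [θ_U,1], and there exists B_U with θ_F^(B_U) = θ_U, then for all B ≥ B_U: U(θ_C^(B)) ≤ U(θ_F^(B)). -/
import Mathlib


open Set

/-- Fairness reversal (forward direction).  If `θ_C < θ_F`, the effective
thresholds preserve order and lie in `[0,1]`, the unfairness `U` is increasing
on `[0,θ_U]` and decreasing on `[θ_U,1]`, `θ_F^(B)` is nonincreasing in `B`,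
and `θ_F^(B_U) = θ_U` for some budget `B_U ≥ 0`, then for every `B ≥ B_U` the
fair threshold is at least as unfair as the base threshold:
`U(θ_C^(B)) ≤ U(θ_F^(B))`. -/
theorem fairness_reversal_forward
    (U effC effF : ℝ → ℝ) (θC θF θU : ℝ)
    (hθU : θU ∈ Icc (0:ℝ) 1)
    (hlt : θC < θF) (h0C : effC 0 = θC) (h0F : effF 0 = θF)
    (horder : ∀ B, 0 ≤ B → effC B ≤ effF B)
    (hantiF : AntitoneOn effF (Ici 0))
    (hrange : ∀ B, 0 ≤ B → effC B ∈ Icc (0:ℝ) 1 ∧ effF B ∈ Icc (0:ℝ) 1)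
    (hU₁ : MonotoneOn U (Icc 0 θU)) (hU₂ : AntitoneOn U (Icc θU 1))
    (BU : ℝ) (hBU : 0 ≤ BU) (hBUeq : effF BU = θU) :
    ∀ B, BU ≤ B → U (effC B) ≤ U (effF B) := by
  intro B hB
  have hB0 : (0:ℝ) ≤ B := le_trans hBU hB
  have hFle : effF B ≤ θU := hBUeq ▸ hantiF hBU hB0 hB
  have hr := hrange B hB0
  have hCF := horder B hB0
  exact hU₁ ⟨hr.1.1, hCF.trans hFle⟩ ⟨hr.2.1, hFle⟩ hCF
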